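/- arXiv:1910.00555 — 2 statements merged into one kernel-verified Lean document; each statement's English description precedes it below -/
import Mathlib

section
/- (Composite Lyapunov derivative bound for adaptive CLFs.) Let V_a : ℝⁿ × ℝᵖ → ℝ be continuously differentiable, f : ℝⁿ → ℝⁿ, F : ℝⁿ → ℝ^{n×p}, g : ℝⁿ → ℝ^{n×m} be continuous, Γ ∈ ℝ^{p×p} be symmetric positive definite, θ⋆ ∈ ℝᵖ, and α₃ : ℝ × ℝᵖ → ℝ. Suppose x : ℝ → ℝⁿ, θ̂ : ℝ → ℝᵖ, u : ℝ → ℝᵐ are differentiable and for all t: (i) ẋ(t) = f(x(t)) + F(x(t)) θ⋆ + g(x(t)) u(t); (ii) θ̂̇(t) = Γ τ(t) with the update law τ(t) = ( (∂V_a/∂x)(x(t),θ̂(t)) · F(x(t)) )ᵀ; (iii) the aCLF inequality (∂V_a/∂x)(x(t),θ̂(t)) · ( f(x(t)) + F(x(t)) · ( θ̂(t) + Γ ((∂V_a/∂θ)(x(t),θ̂(t)))ᵀ ) + g(x(t)) u(t) ) ≤ −α₃(‖x(t)‖, θ̂(t)). Define θ̃(t) = θ⋆ − θ̂(t) and V(t)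 = V_a(x(t),θ̂(t)) + (1/2) θ̃(t)ᵀ Γ⁻¹ θ̃(t). Then V is differentiable and V̇(t) ≤ −α₃(‖x(t)‖, θ̂(t)) for all t. -/
open Matrix

/-- The Euclidean norm of a vector in `ℝ^k`. -/
noncomputable def euclNorm {k : ℕ} (v : Fin k → ℝ) : ℝ :=
  ‖(WithLp.equiv 2 (Fin k → ℝ)).symm v‖

lemma quadDeriv {p : ℕ} (M : Matrix (Fin p) (Fin p) ℝ) {c : ℝ → Fin p → ℝ}
    {c' : Fin p → ℝ} {t : ℝ} (hc : HasDerivAt c c' t) :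
    HasDerivAt (fun s => c s ⬝ᵥ M *ᵥ c s) (c' ⬝ᵥ M *ᵥ c t + c t ⬝ᵥ M *ᵥ c') t := by
  have hci : ∀ i, HasDerivAt (fun s => c s i) (c' i) t := fun i => hasDerivAt_pi.mp hc i
  have hfun : (fun s => c s ⬝ᵥ M *ᵥ c s)
      = fun s => ∑ i, ∑ j, c s i * (M i j * c s j) := by
    funext s; simp [dotProduct, Matrix.mulVec, Finset.mul_sum]
  have he : (c' ⬝ᵥ M *ᵥ c t + c t ⬝ᵥ M *ᵥ c')
      = ∑ i, ∑ j, (c' i * (M i j * c t j) + c t i * (M i j * c' j)) := by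
    simp [dotProduct, Matrix.mulVec, Finset.mul_sum, Finset.sum_add_distrib]
  rw [hfun, he]
  exact HasDerivAt.fun_sum fun i _ => HasDerivAt.fun_sum fun j _ =>
    (hci i).mul ((hci j).const_mul (M i j))


/-- Composite Lyapunov derivative bound for adaptive CLFs: along the closed
loop with update law `τ = ((∂V_a/∂x) F(x))ᵀ` and the aCLF inequality, the
composite Lyapunov function `V(t) = V_a(x(t),θ̂(t)) + (1/2) θ̃ᵀ Γ⁻¹ θ̃` is
differentiable with `V̇(t) ≤ −α₃(‖x(t)‖, θ̂(t))` for all `t`. -/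
theorem composite_lyapunov_derivative_bound
    {n p m : ℕ}
    (Va : ((Fin n → ℝ) × (Fin p → ℝ)) → ℝ) (hVa : ContDiff ℝ 1 Va)
    (f : (Fin n → ℝ) → (Fin n → ℝ)) (hf : Continuous f)
    (F : (Fin n → ℝ) → Matrix (Fin n) (Fin p) ℝ) (hF : Continuous F)
    (g : (Fin n → ℝ) → Matrix (Fin n) (Fin m) ℝ) (hg : Continuous g)
    (Γ : Matrix (Fin p) (Fin p) ℝ) (hΓ : Γ.PosDef)
    (θs : Fin p → ℝ)
    (α₃ : ℝ → (Fin p → ℝ) → ℝ)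
    (x : ℝ → (Fin n → ℝ)) (θh : ℝ → (Fin p → ℝ)) (u : ℝ → (Fin m → ℝ))
    -- the adaptation law τ(t) = ((∂V_a/∂x)(x(t),θ̂(t)) · F(x(t)))ᵀ
    (τ : ℝ → (Fin p → ℝ))
    (hτ : ∀ t, τ t = fun i =>
      (fderiv ℝ (fun y => Va (y, θh t)) (x t)) (fun j => F (x t) j i))
    -- (i) closed-loop dynamics ẋ = f(x) + F(x) θ⋆ + g(x) u
    (hx : ∀ t, HasDerivAt x
      (f (x t) + (F (x t)).mulVec θs + (g (x t)).mulVec (u t)) t)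
    -- (ii) parameter update θ̂̇ = Γ τ
    (hθh : ∀ t, HasDerivAt θh (Γ.mulVec (τ t)) t)
    -- (iii) the aCLF inequality
    (hclf : ∀ t,
      (fderiv ℝ (fun y => Va (y, θh t)) (x t))
        (f (x t)
          + (F (x t)).mulVec
              (θh t + Γ.mulVec (fun i =>
                (fderiv ℝ (fun θ => Va (x t, θ)) (θh t)) (Pi.single i 1)))
          + (g (x t)).mulVec (u t))
      ≤ -α₃ (euclNorm (x t)) (θh t))
    -- the composite Lyapunov function
    (V : ℝ → ℝ)
    (hV : V = fun t => Va (x t, θh t)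
      + (1 / 2) * ((θs - θh t) ⬝ᵥ Γ⁻¹.mulVec (θs - θh t))) :
    ∀ t, DifferentiableAt ℝ V t ∧ deriv V t ≤ -α₃ (euclNorm (x t)) (θh t) := by
  intro t
  have hVd : DifferentiableAt ℝ Va (x t, θh t) :=
    (hVa.differentiable one_ne_zero).differentiableAt
  set D := fderiv ℝ Va (x t, θh t) with hDdef
  have hD : HasFDerivAt Va D (x t, θh t) := hVd.hasFDerivAt
  have hA : HasFDerivAt (fun y => Va (y, θh t))
      (D.comp (ContinuousLinearMap.inl ℝ (Fin n → ℝ) (Fin p → ℝ))) (x t) :=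
    hD.comp (x t) ((hasFDerivAt_id (x t)).prodMk (hasFDerivAt_const (θh t) (x t)))
  have hB : HasFDerivAt (fun θ => Va (x t, θ))
      (D.comp (ContinuousLinearMap.inr ℝ (Fin n → ℝ) (Fin p → ℝ))) (θh t) :=
    hD.comp (θh t) ((hasFDerivAt_const (x t) (θh t)).prodMk (hasFDerivAt_id (θh t)))
  have hAf : ∀ v, fderiv ℝ (fun y => Va (y, θh t)) (x t) v = D (v, 0) := by
    intro v; rw [hA.fderiv]; rfl
  have hBf : ∀ v, fderiv ℝ (fun θ => Va (x t, θ)) (θh t) v = D (0, v) := by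
    intro v; rw [hB.fderiv]; rfl
  have hτ' : ∀ i, τ t i = D ((fun j => F (x t) j i), 0) := by
    intro i; rw [hτ t]; exact hAf _
  -- linearity facts for D
  have hsplit : ∀ (a : Fin n → ℝ) (b : Fin p → ℝ), D (a, b) = D (a, 0) + D (0, b) := by
    intro a b
    have : (a, b) = (a, (0 : Fin p → ℝ)) + ((0 : Fin n → ℝ), b) := by simp
    rw [this, map_add]
  have hadd1 : ∀ (a b : Fin n → ℝ), D (a + b, 0) = D (a, 0) + D (b, 0) := by
    intro a b
    have : ((a + b : Fin n → ℝ), (0 : Fin p → ℝ))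
        = (a, (0 : Fin p → ℝ)) + (b, (0 : Fin p → ℝ)) := by simp
    rw [this, map_add]
  -- D((F x) *ᵥ v, 0) = v ⬝ᵥ τ t
  have hFv : ∀ v : Fin p → ℝ, D ((F (x t)) *ᵥ v, 0) = v ⬝ᵥ τ t := by
    intro v
    have key := LinearMap.pi_apply_eq_sum_univ
      (((D.comp (ContinuousLinearMap.inl ℝ (Fin n → ℝ) (Fin p → ℝ))).toLinearMap).comp
        (F (x t)).mulVecLin) v
    simp only [LinearMap.comp_apply, Matrix.mulVecLin_apply, ContinuousLinearMap.coe_coe,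
      ContinuousLinearMap.comp_apply, ContinuousLinearMap.inl_apply] at key
    rw [key, dotProduct]
    refine Finset.sum_congr rfl fun i _ => ?_
    have hcol : (F (x t)) *ᵥ (fun j => if i = j then 1 else 0) = fun j => F (x t) j i := by
      funext j; simp [Matrix.mulVec, dotProduct]
    rw [hcol, smul_eq_mul, ← hτ' i]
  -- D(0, v) = v ⬝ᵥ w where w i = D(0, Pi.single i 1)
  set w : Fin p → ℝ := fun i => D (0, Pi.single i 1) with hwdef
  have hB0 : ∀ v : Fin p → ℝ, D (0, v) = v ⬝ᵥ w := by
    intro v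
    have key := LinearMap.pi_apply_eq_sum_univ
      ((D.comp (ContinuousLinearMap.inr ℝ (Fin n → ℝ) (Fin p → ℝ))).toLinearMap) v
    simp only [LinearMap.comp_apply, ContinuousLinearMap.coe_coe,
      ContinuousLinearMap.comp_apply, ContinuousLinearMap.inr_apply] at key
    rw [key, dotProduct]
    refine Finset.sum_congr rfl fun i _ => ?_
    have : (fun j => if i = j then (1 : ℝ) else 0) = Pi.single i 1 := by
      funext j; simp [Pi.single_apply, eq_comm]
    rw [this, smul_eq_mul, hwdef]
  -- matrix algebra
  have hGs : Γᵀ = Γ := by simpa using hΓ.1.eq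
  have hdet : IsUnit Γ.det := hΓ.det_pos.ne'.isUnit
  have hGinvs : Γ⁻¹ᵀ = Γ⁻¹ := by rw [Matrix.transpose_nonsing_inv, hGs]
  have hGinvG : ∀ v : Fin p → ℝ, Γ⁻¹ *ᵥ (Γ *ᵥ v) = v := by
    intro v; rw [Matrix.mulVec_mulVec, Matrix.nonsing_inv_mul _ hdet, Matrix.one_mulVec]
  have hGGinv : ∀ v : Fin p → ℝ, Γ *ᵥ (Γ⁻¹ *ᵥ v) = v := by
    intro v; rw [Matrix.mulVec_mulVec, Matrix.mul_nonsing_inv _ hdet, Matrix.one_mulVec]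
  have hsymm : ∀ (M : Matrix (Fin p) (Fin p) ℝ), Mᵀ = M →
      ∀ a b : Fin p → ℝ, a ⬝ᵥ M *ᵥ b = (M *ᵥ a) ⬝ᵥ b := by
    intro M hM a b
    rw [Matrix.dotProduct_mulVec, ← Matrix.mulVec_transpose, hM]
  -- derivative of V
  have hc : HasDerivAt (fun s => θs - θh s) (-(Γ *ᵥ τ t)) t := by
    exact ((hasDerivAt_const t θs).sub (hθh t)).congr_deriv (zero_sub _)
  have hQ := quadDeriv Γ⁻¹ hc
  have hV1 : HasDerivAt (fun s => Va (x s, θh s))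
      (D (f (x t) + (F (x t)) *ᵥ θs + (g (x t)) *ᵥ u t, Γ *ᵥ τ t)) t :=
    hD.comp_hasDerivAt t ((hx t).prodMk (hθh t))
  have hVt : HasDerivAt V
      (D (f (x t) + (F (x t)) *ᵥ θs + (g (x t)) *ᵥ u t, Γ *ᵥ τ t)
        + (1 / 2) * ((-(Γ *ᵥ τ t)) ⬝ᵥ Γ⁻¹ *ᵥ (θs - θh t)
            + (θs - θh t) ⬝ᵥ Γ⁻¹ *ᵥ (-(Γ *ᵥ τ t)))) t := by
    rw [hV]; exact hV1.add (hQ.const_mul (1 / 2))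
  refine ⟨hVt.differentiableAt, ?_⟩
  rw [hVt.deriv]
  have hclf' := hclf t
  simp only [hAf, hBf] at hclf'
  refine le_trans (le_of_eq ?_) hclf'
  -- quadratic part equalities
  have e1 : (-(Γ *ᵥ τ t)) ⬝ᵥ Γ⁻¹ *ᵥ (θs - θh t) = -((θs - θh t) ⬝ᵥ τ t) := by
    rw [neg_dotProduct, hsymm Γ⁻¹ hGinvs, hGinvG, dotProduct_comm]
  have e2 : (θs - θh t) ⬝ᵥ Γ⁻¹ *ᵥ (-(Γ *ᵥ τ t)) = -((θs - θh t) ⬝ᵥ τ t) := by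
    rw [Matrix.mulVec_neg, dotProduct_neg, hGinvG]
  have e3 : D (0, Γ *ᵥ τ t) = ((Γ *ᵥ w) ⬝ᵥ τ t) := by
    rw [hB0, dotProduct_comm, hsymm Γ hGs, dotProduct_comm]
  -- expand both sides
  rw [hsplit, e1, e2, e3]
  rw [Matrix.mulVec_add, hadd1, hadd1, hadd1, hadd1, hadd1, hFv, hFv, hFv]
  rw [sub_dotProduct, ← hwdef]
  ring
end

section
/- (Global boundedness of aCLF closed-loop trajectories.) Under the hypotheses of the composite Lyapunov derivative bound — V_a : ℝⁿ × ℝᵖ → ℝ continuously differentiable with α₁(‖x‖, θ) ≤ V_a(x,θ) for all x, θ, where for each θ the map r ↦ α₁(r,θ) is a class K∞ function (continuous, strictly increasing, α₁(0,θ)=0, unbounded); Γ symmetric positive definite; trajectories x(t), θ̂(t), u(t) on [0,∞) satisfying the closed-loop dynamics ẋ = f(x) + F(x)θ⋆ + g(x)u, the update law θ̂̇ = Γ((∂V_a/∂x)F(x))ᵀ, and the aCLF inequality with α₃(‖x(t)‖,θ̂(t)) ≥ 0 — let V(t) = V_a(x(t),θ̂(t)) + (1/2)(θ⋆−θ̂(t))ᵀ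 Γ⁻¹ (θ⋆−θ̂(t)). Then for all t ≥ 0: α₁(‖x(t)‖, θ̂(t)) ≤ V(0) and (1/2)(θ⋆−θ̂(t))ᵀ Γ⁻¹ (θ⋆−θ̂(t)) ≤ V(0); in particular ‖θ⋆ − θ̂(t)‖² ≤ 2 λ_max(Γ) V(0), so the solution (x(t), θ̂(t)) is globally bounded. -/
open Matrix Filter

/- ### Auxiliary lemmas -/

lemma euclNorm_nonneg {k : ℕ} (v : Fin k → ℝ) : 0 ≤ euclNorm v := norm_nonneg _

/-- Decomposition of the total fderiv on a product into partial derivatives. -/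
lemma fderiv_prod_decomp {E F : Type*} [NormedAddCommGroup E] [NormedSpace ℝ E]
    [NormedAddCommGroup F] [NormedSpace ℝ F]
    {Va : E × F → ℝ} (h : Differentiable ℝ Va) (a : E) (b : F) (hk : E × F) :
    fderiv ℝ Va (a, b) hk
      = fderiv ℝ (fun y => Va (y, b)) a hk.1 + fderiv ℝ (fun θ' => Va (a, θ')) b hk.2 := by
  have h1 : HasFDerivAt (fun y => Va (y, b))
      ((fderiv ℝ Va (a, b)).comp (ContinuousLinearMap.inl ℝ E F)) a :=
    (h (a, b)).hasFDerivAt.comp a (hasFDerivAt_prodMk_left a b)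
  have h2 : HasFDerivAt (fun θ' => Va (a, θ'))
      ((fderiv ℝ Va (a, b)).comp (ContinuousLinearMap.inr ℝ E F)) b :=
    (h (a, b)).hasFDerivAt.comp b (hasFDerivAt_prodMk_right a b)
  rw [h1.fderiv, h2.fderiv]
  simp only [ContinuousLinearMap.comp_apply, ContinuousLinearMap.inl_apply,
    ContinuousLinearMap.inr_apply]
  rw [← map_add]
  congr 1
  simp

lemma hasDerivAt_dot {k : ℕ} {a b : ℝ → (Fin k → ℝ)} {a' b' : Fin k → ℝ} {t : ℝ}
    (ha : HasDerivAt a a' t) (hb : HasDerivAt b b' t) :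
    HasDerivAt (fun s => a s ⬝ᵥ b s) (a' ⬝ᵥ b t + a t ⬝ᵥ b') t := by
  have ha' := hasDerivAt_pi.mp ha
  have hb' := hasDerivAt_pi.mp hb
  have h : HasDerivAt (fun s => ∑ i, a s i * b s i)
      (∑ i, (a' i * b t i + a t i * b' i)) t :=
    HasDerivAt.fun_sum fun i _ => (ha' i).mul (hb' i)
  simpa [dotProduct, Finset.sum_add_distrib] using h

lemma hasDerivAt_mulVec {k l : ℕ} (M : Matrix (Fin k) (Fin l) ℝ) {b : ℝ → (Fin l → ℝ)}
    {b' : Fin l → ℝ} {t : ℝ} (hb : HasDerivAt b b' t) :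
    HasDerivAt (fun s => M *ᵥ b s) (M *ᵥ b') t := by
  rw [hasDerivAt_pi]
  intro i
  have hb' := hasDerivAt_pi.mp hb
  have h : HasDerivAt (fun s => ∑ j, M i j * b s j) (∑ j, M i j * b' j) t :=
    HasDerivAt.fun_sum fun j _ => (hb' j).const_mul (M i j)
  simpa [mulVec, dotProduct] using h

/-- A continuous linear functional on `ℝ^k` applied to a vector, as a dot product with its
values on the standard basis. -/
lemma clm_apply_eq_dot {k : ℕ} (L : (Fin k → ℝ) →L[ℝ] ℝ) (w : Fin k → ℝ) :
    L w = w ⬝ᵥ (fun i => L (Pi.single i 1)) := by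
  have hw : w = ∑ i, w i • (Pi.single i 1 : Fin k → ℝ) := by
    funext j
    simp [Finset.sum_apply, Pi.single_apply]
  conv_lhs => rw [hw]
  rw [map_sum]
  simp [dotProduct]

/-- Applying a linear functional to `F *ᵥ e` equals `e ⬝ᵥ τ` with `τ i = L (col i of F)`. -/
lemma dot_tau {n p : ℕ} (L : (Fin n → ℝ) →L[ℝ] ℝ) (F : Matrix (Fin n) (Fin p) ℝ)
    (e : Fin p → ℝ) :
    e ⬝ᵥ (fun i => L (fun j => F j i)) = L (F *ᵥ e) := by
  have h : F *ᵥ e = ∑ i, e i • (fun j => F j i) := by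
    funext j
    simp [mulVec, dotProduct, Finset.sum_apply, mul_comm]
  rw [h, map_sum]
  simp [dotProduct]

/-- Rayleigh-type bound: `‖v‖² ≤ λ_max(Γ) ⟨v, Γ⁻¹ v⟩` for `Γ` positive definite. -/
lemma sq_norm_le_iSup_eigen_mul {p : ℕ} {Γ : Matrix (Fin p) (Fin p) ℝ} (hΓ : Γ.PosDef)
    (v : Fin p → ℝ) :
    euclNorm v ^ 2 ≤ (⨆ i, hΓ.1.eigenvalues i) * (v ⬝ᵥ Γ⁻¹ *ᵥ v) := by
  classical
  have hH := hΓ.1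
  set B := hH.eigenvectorBasis with hB
  set lam := hH.eigenvalues with hlam
  have hlampos : ∀ i, 0 < lam i := fun i => hΓ.eigenvalues_pos i
  have hdet : IsUnit Γ.det := isUnit_iff_ne_zero.mpr hΓ.det_pos.ne'
  have hinvT : Γ⁻¹ᵀ = Γ⁻¹ := by
    have := hH.inv
    rwa [Matrix.IsHermitian, conjTranspose_eq_transpose_of_trivial] at this
  have hinveig : ∀ i, Γ⁻¹ *ᵥ ⇑(B i) = (lam i)⁻¹ • ⇑(B i) := by
    intro i
    have h1 := hH.mulVec_eigenvectorBasis i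
    have h2 : Γ⁻¹ *ᵥ (Γ *ᵥ ⇑(B i)) = ⇑(B i) := by
      rw [mulVec_mulVec, nonsing_inv_mul Γ hdet, one_mulVec]
    rw [h1, mulVec_smul] at h2
    have h3 : (lam i)⁻¹ • (lam i • (Γ⁻¹ *ᵥ ⇑(B i))) = (lam i)⁻¹ • ⇑(B i) := by rw [h2]
    rwa [smul_smul, inv_mul_cancel₀ (hlampos i).ne', one_smul] at h3
  set w : EuclideanSpace ℝ (Fin p) := (WithLp.equiv 2 (Fin p → ℝ)).symm v with hw
  set c : Fin p → ℝ := fun i => v ⬝ᵥ ⇑(B i) with hc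
  have hinner : ∀ i, (inner ℝ w (B i) : ℝ) = c i := by
    intro i
    simp [hw, hc, PiLp.inner_apply, RCLike.inner_apply, dotProduct, WithLp.equiv_symm_apply, PiLp.toLp_apply]
    exact Finset.sum_congr rfl fun _ _ => mul_comm _ _
  have hinner' : ∀ i, (inner ℝ (B i) w : ℝ) = c i := by
    intro i
    rw [real_inner_comm]
    exact hinner i
  have hA : v ⬝ᵥ v = ∑ i, c i * c i := by
    have h := B.sum_inner_mul_inner w w
    have hww : (inner ℝ w w : ℝ) = v ⬝ᵥ v := by
      simp [hw, PiLp.inner_apply, RCLike.inner_apply, dotProduct, WithLp.equiv_symm_apply, PiLp.toLp_apply,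
        EuclideanSpace.norm_sq_eq, Real.norm_eq_abs, sq_abs]
      exact Finset.sum_congr rfl fun _ _ => sq _
    rw [← hww, ← h]
    refine Finset.sum_congr rfl fun i _ => ?_
    rw [hinner i, hinner' i]
  set w2 : EuclideanSpace ℝ (Fin p) := (WithLp.equiv 2 (Fin p → ℝ)).symm (Γ⁻¹ *ᵥ v) with hw2
  have hBw2 : ∀ i, (inner ℝ (B i) w2 : ℝ) = (lam i)⁻¹ * c i := by
    intro i
    have h1 : (inner ℝ (B i) w2 : ℝ) = ⇑(B i) ⬝ᵥ (Γ⁻¹ *ᵥ v) := by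
      simp [hw2, PiLp.inner_apply, RCLike.inner_apply, dotProduct, WithLp.equiv_symm_apply, PiLp.toLp_apply]
      exact Finset.sum_congr rfl fun _ _ => mul_comm _ _
    rw [h1, dotProduct_mulVec, ← mulVec_transpose, hinvT, hinveig i, smul_dotProduct,
      smul_eq_mul, dotProduct_comm]
  have hBmain : v ⬝ᵥ Γ⁻¹ *ᵥ v = ∑ i, c i * ((lam i)⁻¹ * c i) := by
    have h := B.sum_inner_mul_inner w w2
    have hww2 : (inner ℝ w w2 : ℝ) = v ⬝ᵥ Γ⁻¹ *ᵥ v := by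
      simp [hw, hw2, PiLp.inner_apply, RCLike.inner_apply, dotProduct,
        WithLp.equiv_symm_apply, PiLp.toLp_apply]
      exact Finset.sum_congr rfl fun _ _ => mul_comm _ _
    rw [← hww2, ← h]
    refine Finset.sum_congr rfl fun i _ => ?_
    rw [hinner i, hBw2 i]
  have hnorm : euclNorm v ^ 2 = v ⬝ᵥ v := by
    have : (inner ℝ w w : ℝ) = v ⬝ᵥ v := by
      simp [hw, PiLp.inner_apply, RCLike.inner_apply, dotProduct, WithLp.equiv_symm_apply, PiLp.toLp_apply,
        EuclideanSpace.norm_sq_eq, Real.norm_eq_abs, sq_abs]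
      exact Finset.sum_congr rfl fun _ _ => sq _
    rw [← this, real_inner_self_eq_norm_sq]
    rfl
  rw [hnorm, hA, hBmain, Finset.mul_sum]
  refine Finset.sum_le_sum fun i _ => ?_
  have h1 : lam i ≤ ⨆ j, lam j := le_ciSup (Set.finite_range lam).bddAbove i
  have h2 : c i * c i = lam i * ((lam i)⁻¹ * (c i * c i)) := by
    rw [← mul_assoc, mul_inv_cancel₀ (hlampos i).ne', one_mul]
  calc c i * c i = lam i * ((lam i)⁻¹ * (c i * c i)) := h2
    _ ≤ (⨆ j, lam j) * ((lam i)⁻¹ * (c i * c i)) := by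
        refine mul_le_mul_of_nonneg_right h1 ?_
        exact mul_nonneg (inv_nonneg.mpr (hlampos i).le) (mul_self_nonneg _)
    _ = (⨆ j, lam j) * (c i * ((lam i)⁻¹ * c i)) := by ring

/-- Global boundedness of aCLF closed-loop trajectories. -/
theorem aclf_trajectories_globally_bounded
    {n p m : ℕ}
    (Va : ((Fin n → ℝ) × (Fin p → ℝ)) → ℝ) (hVa : ContDiff ℝ 1 Va)
    (α₁ : ℝ → (Fin p → ℝ) → ℝ)
    -- for each θ, r ↦ α₁(r,θ) is class K∞
    (hα₁cont : ∀ θ, ContinuousOn (fun r => α₁ r θ) (Set.Ici 0))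
    (hα₁mono : ∀ θ, StrictMonoOn (fun r => α₁ r θ) (Set.Ici 0))
    (hα₁0 : ∀ θ, α₁ 0 θ = 0)
    (hα₁top : ∀ θ, Tendsto (fun r => α₁ r θ) atTop atTop)
    -- lower bound α₁(‖x‖,θ) ≤ V_a(x,θ)
    (hlow : ∀ x θ, α₁ (euclNorm x) θ ≤ Va (x, θ))
    (f : (Fin n → ℝ) → (Fin n → ℝ)) (hf : Continuous f)
    (F : (Fin n → ℝ) → Matrix (Fin n) (Fin p) ℝ) (hF : Continuous F)
    (g : (Fin n → ℝ) → Matrix (Fin n) (Fin m) ℝ) (hg : Continuous g)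
    (Γ : Matrix (Fin p) (Fin p) ℝ) (hΓ : Γ.PosDef)
    (θs : Fin p → ℝ)
    (α₃ : ℝ → (Fin p → ℝ) → ℝ)
    (x : ℝ → (Fin n → ℝ)) (θh : ℝ → (Fin p → ℝ)) (u : ℝ → (Fin m → ℝ))
    -- the adaptation law τ(t) = ((∂V_a/∂x)(x(t),θ̂(t)) · F(x(t)))ᵀ
    (τ : ℝ → (Fin p → ℝ))
    (hτ : ∀ t, 0 ≤ t → τ t = fun i =>
      (fderiv ℝ (fun y => Va (y, θh t)) (x t)) (fun j => F (x t) j i))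
    -- closed-loop dynamics ẋ = f(x) + F(x) θ⋆ + g(x) u
    (hx : ∀ t, 0 ≤ t → HasDerivAt x
      (f (x t) + (F (x t)).mulVec θs + (g (x t)).mulVec (u t)) t)
    -- parameter update θ̂̇ = Γ τ
    (hθh : ∀ t, 0 ≤ t → HasDerivAt θh (Γ.mulVec (τ t)) t)
    -- the aCLF inequality
    (hclf : ∀ t, 0 ≤ t →
      (fderiv ℝ (fun y => Va (y, θh t)) (x t))
        (f (x t)
          + (F (x t)).mulVec
              (θh t + Γ.mulVec (fun i =>
                (fderiv ℝ (fun θ => Va (x t, θ)) (θh t)) (Pi.single i 1)))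
          + (g (x t)).mulVec (u t))
      ≤ -α₃ (euclNorm (x t)) (θh t))
    -- nonnegativity of α₃ along the trajectory
    (hα₃ : ∀ t, 0 ≤ t → 0 ≤ α₃ (euclNorm (x t)) (θh t))
    -- the composite Lyapunov function
    (V : ℝ → ℝ)
    (hV : V = fun t => Va (x t, θh t)
      + (1 / 2) * ((θs - θh t) ⬝ᵥ Γ⁻¹.mulVec (θs - θh t))) :
    ∀ t, 0 ≤ t →
      α₁ (euclNorm (x t)) (θh t) ≤ V 0 ∧
      (1 / 2) * ((θs - θh t) ⬝ᵥ Γ⁻¹.mulVec (θs - θh t)) ≤ V 0 ∧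
      (euclNorm (θs - θh t)) ^ 2 ≤ 2 * (⨆ i, hΓ.1.eigenvalues i) * V 0 := by
  classical
  have hdiff : Differentiable ℝ Va := hVa.differentiable one_ne_zero
  have hdet : IsUnit Γ.det := isUnit_iff_ne_zero.mpr hΓ.det_pos.ne'
  have hΓT : Γᵀ = Γ := by
    have := hΓ.1
    rwa [Matrix.IsHermitian, conjTranspose_eq_transpose_of_trivial] at this
  have hinvT : Γ⁻¹ᵀ = Γ⁻¹ := by
    have := hΓ.1.inv
    rwa [Matrix.IsHermitian, conjTranspose_eq_transpose_of_trivial] at this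
  have hΓinvΓ : ∀ v : Fin p → ℝ, Γ⁻¹ *ᵥ (Γ *ᵥ v) = v := by
    intro v
    rw [mulVec_mulVec, nonsing_inv_mul Γ hdet, one_mulVec]
  -- derivative of V on [0,∞)
  have hVderiv : ∀ t, 0 ≤ t → HasDerivAt V
      ((fderiv ℝ (fun y => Va (y, θh t)) (x t))
        (f (x t)
          + (F (x t)).mulVec
              (θh t + Γ.mulVec (fun i =>
                (fderiv ℝ (fun θ => Va (x t, θ)) (θh t)) (Pi.single i 1)))
          + (g (x t)).mulVec (u t))) t := by
    intro t ht
    have hxt := hx t ht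
    have hθt := hθh t ht
    set X' := f (x t) + (F (x t)) *ᵥ θs + (g (x t)) *ᵥ (u t) with hX'
    have h1 : HasDerivAt (fun s => Va (x s, θh s))
        ((fderiv ℝ Va (x t, θh t)) (X', Γ *ᵥ τ t)) t :=
      (hdiff (x t, θh t)).hasFDerivAt.comp_hasDerivAt t (hxt.prodMk hθt)
    have he : HasDerivAt (fun s => θs - θh s) (-(Γ *ᵥ τ t)) t := hθt.const_sub θs
    have he2 : HasDerivAt (fun s => Γ⁻¹ *ᵥ (θs - θh s)) (Γ⁻¹ *ᵥ (-(Γ *ᵥ τ t))) t :=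
      hasDerivAt_mulVec _ he
    have h2 : HasDerivAt (fun s => (θs - θh s) ⬝ᵥ Γ⁻¹ *ᵥ (θs - θh s))
        ((-(Γ *ᵥ τ t)) ⬝ᵥ Γ⁻¹ *ᵥ (θs - θh t) + (θs - θh t) ⬝ᵥ Γ⁻¹ *ᵥ (-(Γ *ᵥ τ t))) t :=
      hasDerivAt_dot he he2
    have htot := h1.add (h2.const_mul (1/2 : ℝ))
    rw [hV]
    convert htot using 1
    · rfl
    · rfl
    · rfl
    -- now prove the value equality
    set Dx := fderiv ℝ (fun y => Va (y, θh t)) (x t) with hDx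
    set Dθ := fderiv ℝ (fun θ' => Va (x t, θ')) (θh t) with hDθ
    set a : Fin p → ℝ := fun i => Dθ (Pi.single i 1) with ha
    set e : Fin p → ℝ := θs - θh t with hee
    -- total derivative decomposition
    have hdec : (fderiv ℝ Va (x t, θh t)) (X', Γ *ᵥ τ t) = Dx X' + Dθ (Γ *ᵥ τ t) :=
      fderiv_prod_decomp hdiff (x t) (θh t) (X', Γ *ᵥ τ t)
    -- the quadratic part
    have hq1 : (-(Γ *ᵥ τ t)) ⬝ᵥ Γ⁻¹ *ᵥ e = -(τ t ⬝ᵥ e) := by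
      rw [neg_dotProduct, dotProduct_mulVec, ← mulVec_transpose, hinvT, hΓinvΓ]
    have hq2 : e ⬝ᵥ Γ⁻¹ *ᵥ (-(Γ *ᵥ τ t)) = -(e ⬝ᵥ τ t) := by
      rw [mulVec_neg, dotProduct_neg, mulVec_mulVec, nonsing_inv_mul Γ hdet, one_mulVec]
    -- e ⬝ᵥ τ = Dx (F e)
    have hτt := hτ t ht
    have hq3 : e ⬝ᵥ τ t = Dx (F (x t) *ᵥ e) := by
      rw [hτt]; exact dot_tau Dx (F (x t)) e
    -- Dθ (Γ τ) = Dx (F (Γ a))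
    have hq4 : Dθ (Γ *ᵥ τ t) = Dx (F (x t) *ᵥ (Γ *ᵥ a)) := by
      rw [clm_apply_eq_dot Dθ (Γ *ᵥ τ t), ← ha]
      have h5 : Dx (F (x t) *ᵥ (Γ *ᵥ a)) = (Γ *ᵥ a) ⬝ᵥ τ t := by
        rw [hτt, dot_tau Dx (F (x t)) (Γ *ᵥ a)]
      rw [h5, dotProduct_comm, dotProduct_mulVec, ← mulVec_transpose, hΓT, dotProduct_comm]
    have hFθh : F (x t) *ᵥ θh t = F (x t) *ᵥ θs - F (x t) *ᵥ e := by
      rw [← mulVec_sub]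
      congr 1
      simp [hee]
    rw [hdec, hq1, hq2, dotProduct_comm (τ t) e, hq3, hq4]
    rw [map_add, map_add, mulVec_add, map_add, hFθh, map_sub, hX']
    rw [map_add, map_add]
    ring
  -- V is antitone on [0,∞)
  have hmono : AntitoneOn V (Set.Ici (0:ℝ)) := by
    apply antitoneOn_of_deriv_nonpos (convex_Ici 0)
    · intro t ht
      exact (hVderiv t ht).continuousAt.continuousWithinAt
    · intro t ht
      rw [interior_Ici] at ht
      exact (hVderiv t ht.le).differentiableAt.differentiableWithinAt
    · intro t ht
      rw [interior_Ici] at ht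
      rw [(hVderiv t ht.le).deriv]
      exact le_trans (hclf t ht.le) (neg_nonpos.mpr (hα₃ t ht.le))
  -- nonnegativity facts
  have hquad : ∀ s, 0 ≤ (θs - θh s) ⬝ᵥ Γ⁻¹ *ᵥ (θs - θh s) := by
    intro s
    have h := (hΓ.inv).posSemidef.dotProduct_mulVec_nonneg (θs - θh s)
    simpa using h
  have hVa0 : ∀ s, 0 ≤ Va (x s, θh s) := by
    intro s
    refine le_trans ?_ (hlow (x s) (θh s))
    have h0 : α₁ 0 (θh s) ≤ α₁ (euclNorm (x s)) (θh s) :=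
      (hα₁mono (θh s)).monotoneOn (Set.self_mem_Ici)
        (Set.mem_Ici.mpr (euclNorm_nonneg _)) (euclNorm_nonneg _)
    rw [hα₁0] at h0
    exact h0
  intro t ht
  have hVt : V t ≤ V 0 := hmono Set.self_mem_Ici (Set.mem_Ici.mpr ht) ht
  have hVtval : V t = Va (x t, θh t)
      + (1/2) * ((θs - θh t) ⬝ᵥ Γ⁻¹ *ᵥ (θs - θh t)) := by rw [hV]
  refine ⟨?_, ?_, ?_⟩
  · calc α₁ (euclNorm (x t)) (θh t) ≤ Va (x t, θh t) := hlow _ _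
      _ ≤ V t := by rw [hVtval]; nlinarith [hquad t]
      _ ≤ V 0 := hVt
  · calc (1/2) * ((θs - θh t) ⬝ᵥ Γ⁻¹ *ᵥ (θs - θh t))
        ≤ V t := by rw [hVtval]; nlinarith [hVa0 t]
      _ ≤ V 0 := hVt
  · have hhalf : (1/2) * ((θs - θh t) ⬝ᵥ Γ⁻¹ *ᵥ (θs - θh t)) ≤ V 0 := by
      calc (1/2) * ((θs - θh t) ⬝ᵥ Γ⁻¹ *ᵥ (θs - θh t))
          ≤ V t := by rw [hVtval]; nlinarith [hVa0 t]
        _ ≤ V 0 := hVt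
    have hkey := sq_norm_le_iSup_eigen_mul hΓ (θs - θh t)
    have hsupnn : 0 ≤ ⨆ i, hΓ.1.eigenvalues i := by
      rcases isEmpty_or_nonempty (Fin p) with hp | hp
      · simp [Real.iSup_of_isEmpty]
      · obtain ⟨i⟩ := hp
        exact le_trans (hΓ.eigenvalues_pos i).le
          (le_ciSup (Set.finite_range _).bddAbove i)
    calc euclNorm (θs - θh t) ^ 2
        ≤ (⨆ i, hΓ.1.eigenvalues i) * ((θs - θh t) ⬝ᵥ Γ⁻¹ *ᵥ (θs - θh t)) := hkey
      _ ≤ (⨆ i, hΓ.1.eigenvalues i) * (2 * V 0) := by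
          refine mul_le_mul_of_nonneg_left ?_ hsupnn
          linarith
      _ = 2 * (⨆ i, hΓ.1.eigenvalues i) * V 0 := by ring
end
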